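/- The map z ↦ φ(z)/Φ(z), where φ and Φ are the standard Gaussian density and CDF, is Lipschitz continuous on ℝ with Lipschitz constant 1; equivalently, its derivative is bounded in absolute value by 1 everywhere. -/

import Mathlib

open MeasureTheory Set Filter Real

/-- Standard Gaussian density. -/
noncomputable def stdGaussPdf (z : ℝ) : ℝ :=
  (Real.sqrt (2 * Real.pi))⁻¹ * Real.exp (-z ^ 2 / 2)

/-- Standard Gaussian cumulative distribution function. -/
noncomputable def stdGaussCdf (z : ℝ) : ℝ := ∫ t in Iic z, stdGaussPdf t

lemma pdf_pos (z : ℝ) : 0 < stdGaussPdf z := by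
  unfold stdGaussPdf
  positivity

lemma pdf_cont : Continuous stdGaussPdf := by
  unfold stdGaussPdf
  continuity

lemma pdf_integrable : Integrable stdGaussPdf := by
  have h := (integrable_exp_neg_mul_sq (by norm_num : (0:ℝ) < 1/2)).const_mul
    (Real.sqrt (2 * Real.pi))⁻¹
  refine h.congr ?_
  filter_upwards with x
  unfold stdGaussPdf
  ring_nf

lemma pdf_hasDeriv (z : ℝ) : HasDerivAt stdGaussPdf (-z * stdGaussPdf z) z := by
  unfold stdGaussPdf
  have h : HasDerivAt (fun z : ℝ => -z ^ 2 / 2) (-z) z := by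
    have := ((hasDerivAt_pow 2 z).neg).div_const 2
    norm_num at this
    refine this.congr_deriv ?_
    ring
  have := (h.exp).const_mul (Real.sqrt (2 * Real.pi))⁻¹
  refine this.congr_deriv ?_
  ring

lemma cdf_sub (a b : ℝ) : stdGaussCdf b - stdGaussCdf a = ∫ t in a..b, stdGaussPdf t := by
  unfold stdGaussCdf
  exact intervalIntegral.integral_Iic_sub_Iic (f := stdGaussPdf) (μ := volume) (a := a) (b := b)
    pdf_integrable.integrableOn pdf_integrable.integrableOn

lemma cdf_hasDeriv (z : ℝ) : HasDerivAt stdGaussCdf (stdGaussPdf z) z := by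
  have heq : stdGaussCdf = fun z => stdGaussCdf 0 + ∫ t in (0:ℝ)..z, stdGaussPdf t := by
    funext z
    rw [← cdf_sub]; ring
  rw [heq]
  refine HasDerivAt.const_add _ ?_
  exact (intervalIntegral.integral_hasDerivAt_right
    (pdf_integrable.intervalIntegrable)
    (pdf_cont.stronglyMeasurableAtFilter _ _) pdf_cont.continuousAt)

lemma cdf_pos (z : ℝ) : 0 < stdGaussCdf z := by
  have h1 : 0 < ∫ t in (z-1)..z, stdGaussPdf t :=
    intervalIntegral.intervalIntegral_pos_of_pos
      (pdf_integrable.intervalIntegrable) (fun t => pdf_pos t) (by linarith)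
  have h2 : (0:ℝ) ≤ stdGaussCdf (z-1) :=
    setIntegral_nonneg measurableSet_Iic fun t _ => (pdf_pos t).le
  have := cdf_sub (z-1) z
  linarith

lemma cdf_tendsto : Tendsto stdGaussCdf atBot (nhds 0) := by
  have h : Tendsto (fun z => ∫ t in z..(0:ℝ), stdGaussPdf t) atBot
      (nhds (∫ t in Iic (0:ℝ), stdGaussPdf t)) :=
    intervalIntegral_tendsto_integral_Iic 0 pdf_integrable.integrableOn tendsto_id
  have heq : ∀ z : ℝ, stdGaussCdf z = stdGaussCdf 0 - ∫ t in z..(0:ℝ), stdGaussPdf t := by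
    intro z; rw [← cdf_sub]; ring
  have h2 : Tendsto (fun z => stdGaussCdf 0 - ∫ t in z..(0:ℝ), stdGaussPdf t) atBot
      (nhds (stdGaussCdf 0 - ∫ t in Iic (0:ℝ), stdGaussPdf t)) := tendsto_const_nhds.sub h
  have h3 : stdGaussCdf 0 - ∫ t in Iic (0:ℝ), stdGaussPdf t = 0 := sub_self _
  rw [h3] at h2
  exact h2.congr fun z => (heq z).symm

lemma pdf_tendsto : Tendsto stdGaussPdf atBot (nhds 0) := by
  unfold stdGaussPdf
  rw [show (0:ℝ) = (Real.sqrt (2 * Real.pi))⁻¹ * 0 by ring]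
  apply Tendsto.const_mul
  apply Real.tendsto_exp_atBot.comp
  have h : Tendsto (fun z : ℝ => z * z) atBot atTop :=
    Filter.Tendsto.atBot_mul_atBot₀ tendsto_id tendsto_id
  have := (tendsto_neg_atTop_atBot.comp h).atBot_div_const (by norm_num : (0:ℝ) < 2)
  refine this.congr fun z => ?_
  simp [Function.comp]; ring

lemma cdf_le_exp {z : ℝ} (hz : z ≤ -2) :
    stdGaussCdf z ≤ (Real.sqrt (2 * Real.pi))⁻¹ * Real.exp z := by
  have h1 : stdGaussCdf z ≤ ∫ t in Iic z, (Real.sqrt (2 * Real.pi))⁻¹ * Real.exp t := by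
    apply setIntegral_mono_on pdf_integrable.integrableOn
      ((integrableOn_exp_Iic z).const_mul _) measurableSet_Iic
    intro t ht
    simp only [Iic, mem_setOf_eq] at ht
    unfold stdGaussPdf
    have hpos : (0:ℝ) < (Real.sqrt (2 * Real.pi))⁻¹ := by positivity
    apply mul_le_mul_of_nonneg_left _ hpos.le
    apply Real.exp_le_exp.2
    nlinarith [ht.trans hz]
  calc stdGaussCdf z ≤ _ := h1
    _ = (Real.sqrt (2 * Real.pi))⁻¹ * Real.exp z := by
        rw [integral_const_mul, integral_exp_Iic]

lemma neg_mul_exp_tendsto : Tendsto (fun z : ℝ => -z * Real.exp z) atBot (nhds 0) := by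
  have h := (Real.tendsto_pow_mul_exp_neg_atTop_nhds_zero 1).comp tendsto_neg_atBot_atTop
  refine h.congr fun z => ?_
  simp [Function.comp]

lemma mul_cdf_tendsto : Tendsto (fun z : ℝ => z * stdGaussCdf z) atBot (nhds 0) := by
  have hg : Tendsto (fun z : ℝ => (Real.sqrt (2 * Real.pi))⁻¹ * (-z * Real.exp z)) atBot
      (nhds 0) := by
    simpa using neg_mul_exp_tendsto.const_mul (Real.sqrt (2 * Real.pi))⁻¹
  refine squeeze_zero_norm' ?_ hg
  · filter_upwards [Iic_mem_atBot (-2 : ℝ)] with z hz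
    simp only [Iic, mem_setOf_eq] at hz
    have h1 : (0:ℝ) ≤ stdGaussCdf z := (cdf_pos z).le
    have h2 := cdf_le_exp hz
    rw [Real.norm_eq_abs, abs_mul, abs_of_nonneg h1, abs_of_nonpos (by linarith : z ≤ 0)]
    have hzpos : (0:ℝ) ≤ -z := by linarith
    calc -z * stdGaussCdf z ≤ -z * ((Real.sqrt (2 * Real.pi))⁻¹ * Real.exp z) :=
          mul_le_mul_of_nonneg_left h2 hzpos
      _ = (Real.sqrt (2 * Real.pi))⁻¹ * (-z * Real.exp z) := by ring

lemma G_nonneg (z : ℝ) : 0 ≤ stdGaussPdf z + z * stdGaussCdf z := by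
  set G : ℝ → ℝ := fun z => stdGaussPdf z + z * stdGaussCdf z with hG
  have hderiv : ∀ x : ℝ, HasDerivAt G (stdGaussCdf x) x := by
    intro x
    have h1 := (pdf_hasDeriv x).add ((hasDerivAt_id x).mul (cdf_hasDeriv x))
    refine h1.congr_deriv ?_
    simp only [id_eq, one_mul]
    ring
  have hmono : Monotone G := by
    apply monotone_of_deriv_nonneg (fun x => (hderiv x).differentiableAt)
    intro x
    rw [(hderiv x).deriv]
    exact (cdf_pos x).le
  have htend : Tendsto G atBot (nhds 0) := by
    simpa using pdf_tendsto.add mul_cdf_tendsto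
  refine le_of_tendsto htend ?_
  filter_upwards [Iic_mem_atBot z] with w hw
  exact hmono hw

noncomputable def millsAux (z : ℝ) : ℝ := (Real.sqrt (z ^ 2 + 4) + z) / 2

lemma millsAux_pos (z : ℝ) : 0 < millsAux z := by
  unfold millsAux
  have h : |z| < Real.sqrt (z ^ 2 + 4) := by
    rw [← Real.sqrt_sq_eq_abs]
    exact Real.sqrt_lt_sqrt (sq_nonneg z) (by linarith)
  have := neg_abs_le z
  linarith

lemma millsAux_le_one {z : ℝ} (hz : z ≤ 0) : millsAux z ≤ 1 := by
  unfold millsAux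
  have h : Real.sqrt (z ^ 2 + 4) ≤ 2 - z := by
    rw [show (2:ℝ) - z = Real.sqrt ((2 - z) ^ 2) by
      rw [Real.sqrt_sq (by linarith)]]
    exact Real.sqrt_le_sqrt (by nlinarith)
  linarith

lemma millsAux_hasDeriv (z : ℝ) :
    HasDerivAt millsAux ((z / Real.sqrt (z ^ 2 + 4) + 1) / 2) z := by
  have hpos : (0:ℝ) < z ^ 2 + 4 := by positivity
  have h1 : HasDerivAt (fun z : ℝ => z ^ 2 + 4) (2 * z) z := by
    simpa using (hasDerivAt_pow 2 z).add_const 4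
  have h2 := (Real.hasDerivAt_sqrt hpos.ne').comp z h1
  have h3 := (h2.add (hasDerivAt_id z)).div_const 2
  refine h3.congr_deriv ?_
  field_simp

lemma millsAux_sq (z : ℝ) : millsAux z ^ 2 = z * millsAux z + 1 := by
  unfold millsAux
  have hw : Real.sqrt (z ^ 2 + 4) ^ 2 = z ^ 2 + 4 := Real.sq_sqrt (by positivity)
  nlinarith [hw]

lemma key_deriv_ineq (z : ℝ) :
    0 ≤ 1 + z * millsAux z - (z / Real.sqrt (z ^ 2 + 4) + 1) / 2 := by
  set w := Real.sqrt (z ^ 2 + 4) with hw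
  have hw0 : 0 < w := Real.sqrt_pos.2 (by positivity)
  have hw2 : w ^ 2 = z ^ 2 + 4 := Real.sq_sqrt (by positivity)
  unfold millsAux
  rw [← hw]
  have key : (w*(1+z^2)+z*(z^2+3)) * (w*(1+z^2)-z*(z^2+3)) = 4 := by
    linear_combination ((1+z^2)^2) * hw2
  have hsum : 0 < 2*(w*(1+z^2)) := by positivity
  have hT : 0 < w*(1+z^2)+z*(z^2+3) := by nlinarith [key, hsum]
  have heq : 1 + z * ((w + z) / 2) - (z / w + 1) / 2 = (w*(1+z^2)+z*(z^2+3))/(2*w) := by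
    field_simp
    linear_combination z * hw2
  rw [heq]
  positivity

lemma F_nonneg (z : ℝ) : stdGaussPdf z * millsAux z ≤ stdGaussCdf z := by
  set F : ℝ → ℝ := fun z => stdGaussCdf z - stdGaussPdf z * millsAux z with hF
  have hderiv : ∀ x : ℝ, HasDerivAt F
      (stdGaussPdf x * (1 + x * millsAux x - (x / Real.sqrt (x ^ 2 + 4) + 1) / 2)) x := by
    intro x
    have h1 := (cdf_hasDeriv x).sub ((pdf_hasDeriv x).mul (millsAux_hasDeriv x))
    refine h1.congr_deriv ?_
    ring
  have hmono : Monotone F := by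
    apply monotone_of_deriv_nonneg (fun x => (hderiv x).differentiableAt)
    intro x
    rw [(hderiv x).deriv]
    exact mul_nonneg (pdf_pos x).le (key_deriv_ineq x)
  have htend : Tendsto F atBot (nhds 0) := by
    have h2 : Tendsto (fun z => stdGaussPdf z * millsAux z) atBot (nhds 0) := by
      refine squeeze_zero_norm' ?_ pdf_tendsto
      filter_upwards [Iic_mem_atBot (0:ℝ)] with z hz
      simp only [Iic, mem_setOf_eq] at hz
      rw [Real.norm_eq_abs, abs_mul, abs_of_nonneg (pdf_pos z).le,
        abs_of_nonneg (millsAux_pos z).le]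
      calc stdGaussPdf z * millsAux z ≤ stdGaussPdf z * 1 :=
            mul_le_mul_of_nonneg_left (millsAux_le_one hz) (pdf_pos z).le
        _ = stdGaussPdf z := by ring
    simpa using cdf_tendsto.sub h2
  have h0 : 0 ≤ F z := by
    refine le_of_tendsto htend ?_
    filter_upwards [Iic_mem_atBot z] with w hw
    exact hmono hw
  simp only [hF] at h0
  linarith

lemma mills_hasDeriv (z : ℝ) : HasDerivAt (fun z => stdGaussPdf z / stdGaussCdf z)
    ((-z * stdGaussPdf z * stdGaussCdf z - stdGaussPdf z * stdGaussPdf z) / stdGaussCdf z ^ 2)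
    z :=
  (pdf_hasDeriv z).div (cdf_hasDeriv z) (cdf_pos z).ne'

lemma mills_deriv_abs (z : ℝ) :
    |(-z * stdGaussPdf z * stdGaussCdf z - stdGaussPdf z * stdGaussPdf z) / stdGaussCdf z ^ 2|
      ≤ 1 := by
  set φ := stdGaussPdf z with hφdef
  set Φ := stdGaussCdf z with hΦdef
  set s := millsAux z with hsdef
  have hφ : 0 < φ := pdf_pos z
  have hΦ : 0 < Φ := cdf_pos z
  have hG : 0 ≤ φ + z * Φ := G_nonneg z
  have hkey : φ * s ≤ Φ := F_nonneg z
  have hs2 : s ^ 2 = z * s + 1 := millsAux_sq z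
  have hs0 : 0 < s := millsAux_pos z
  rw [abs_le]
  constructor
  · rw [le_div_iff₀ (by positivity)]
    nlinarith [mul_nonneg (sub_nonneg.2 hkey) (by positivity : (0:ℝ) ≤ s * Φ + φ),
      mul_pos hφ hΦ, mul_pos hs0 hΦ]
  · have hnum : -z * φ * Φ - φ * φ ≤ 0 := by nlinarith [mul_nonneg hφ.le hG]
    have : (-z * φ * Φ - φ * φ) / Φ ^ 2 ≤ 0 :=
      div_nonpos_of_nonpos_of_nonneg hnum (by positivity)
    linarith

/-- The (reflected) Gaussian inverse Mills ratio `z ↦ φ(z)/Φ(z)` is `1`-Lipschitz on `ℝ`,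
and its derivative is bounded by `1` in absolute value everywhere. -/
theorem inverse_mills_ratio_lipschitz :
    LipschitzWith 1 (fun z => stdGaussPdf z / stdGaussCdf z) ∧
    ∀ z : ℝ, |deriv (fun z => stdGaussPdf z / stdGaussCdf z) z| ≤ 1 := by
  have habs : ∀ z : ℝ, |deriv (fun z => stdGaussPdf z / stdGaussCdf z) z| ≤ 1 := by
    intro z
    rw [(mills_hasDeriv z).deriv]
    exact mills_deriv_abs z
  refine ⟨?_, habs⟩
  apply lipschitzWith_of_nnnorm_deriv_le (fun z => (mills_hasDeriv z).differentiableAt)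
  intro z
  have := habs z
  rw [← Real.norm_eq_abs] at this
  exact_mod_cast this
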